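/- Fix real matrices A ∈ ℝ^{n×n}, B₂ ∈ ℝ^{n×m}, C₂ ∈ ℝ^{p×n}. Let K ∈ ℝ^{(m+n)×(p+n)} be arbitrary and let P be a 2n×2n real symmetric positive definite matrix with P₁₂ invertible. Then Ψ_P((P⁻¹)₁₁, P₁₁, P₁₂) = P and Ψ_K(Φ_Λ(K,P), (P⁻¹)₁₁, P₁₁, P₁₂) = K. -/

import Mathlib

open Matrix

noncomputable section

private lemma posDef_blk₁₁ {l m : Type*} [Fintype l] [Fintype m]
    {M : Matrix (l ⊕ m) (l ⊕ m) ℝ} (h : M.PosDef) : M.toBlocks₁₁.PosDef := by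
  refine Matrix.PosDef.of_dotProduct_mulVec_pos ?_ fun x hx => ?_
  · ext i j
    simpa [Matrix.toBlocks₁₁] using congrFun (congrFun h.1 (Sum.inl i)) (Sum.inl j)
  · have h0 : (Sum.elim x 0 : l ⊕ m → ℝ) ≠ 0 := fun hc =>
      hx (funext fun i => congrFun hc (Sum.inl i))
    have h2 := h.dotProduct_mulVec_pos h0
    have he : star (Sum.elim x 0) ⬝ᵥ M *ᵥ Sum.elim x 0
        = star x ⬝ᵥ M.toBlocks₁₁ *ᵥ x := by
      simp [dotProduct, mulVec, Fintype.sum_sum_type, Matrix.toBlocks₁₁]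
    rwa [he] at h2

private lemma posDef_blk₂₂ {l m : Type*} [Fintype l] [Fintype m]
    {M : Matrix (l ⊕ m) (l ⊕ m) ℝ} (h : M.PosDef) : M.toBlocks₂₂.PosDef := by
  refine Matrix.PosDef.of_dotProduct_mulVec_pos ?_ fun x hx => ?_
  · ext i j
    simpa [Matrix.toBlocks₂₂] using congrFun (congrFun h.1 (Sum.inr i)) (Sum.inr j)
  · have h0 : (Sum.elim 0 x : l ⊕ m → ℝ) ≠ 0 := fun hc =>
      hx (funext fun i => congrFun hc (Sum.inr i))
    have h2 := h.dotProduct_mulVec_pos h0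
    have he : star (Sum.elim 0 x) ⬝ᵥ M *ᵥ Sum.elim 0 x
        = star x ⬝ᵥ M.toBlocks₂₂ *ᵥ x := by
      simp [dotProduct, mulVec, Fintype.sum_sum_type, Matrix.toBlocks₂₂]
    rwa [he] at h2

/-- The mapping `Φ_M(K,P)` arising in output feedback ECL constructions. -/
def PhiM {n m p : ℕ} (A : Matrix (Fin n) (Fin n) ℝ) (B₂ : Matrix (Fin n) (Fin m) ℝ)
    (C₂ : Matrix (Fin p) (Fin n) ℝ)
    (K : Matrix (Fin m ⊕ Fin n) (Fin p ⊕ Fin n) ℝ)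
    (P : Matrix (Fin n ⊕ Fin n) (Fin n ⊕ Fin n) ℝ) : Matrix (Fin n) (Fin n) ℝ :=
  P.toBlocks₁₂ * K.toBlocks₂₁ * C₂ * (P⁻¹).toBlocks₁₁
    + P.toBlocks₁₁ * B₂ * K.toBlocks₁₂ * (P⁻¹).toBlocks₂₁
    + P.toBlocks₁₂ * K.toBlocks₂₂ * (P⁻¹).toBlocks₂₁
    + P.toBlocks₁₁ * (A + B₂ * K.toBlocks₁₁ * C₂) * (P⁻¹).toBlocks₁₁

/-- The mapping `Φ_Λ(K,P)` arising in output feedback ECL constructions. -/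
def PhiLam {n m p : ℕ} (A : Matrix (Fin n) (Fin n) ℝ) (B₂ : Matrix (Fin n) (Fin m) ℝ)
    (C₂ : Matrix (Fin p) (Fin n) ℝ)
    (K : Matrix (Fin m ⊕ Fin n) (Fin p ⊕ Fin n) ℝ)
    (P : Matrix (Fin n ⊕ Fin n) (Fin n ⊕ Fin n) ℝ) :
    Matrix (Fin m ⊕ Fin n) (Fin p ⊕ Fin n) ℝ :=
  Matrix.fromBlocks K.toBlocks₁₁
    (K.toBlocks₁₁ * C₂ * (P⁻¹).toBlocks₁₁ + K.toBlocks₁₂ * (P⁻¹).toBlocks₂₁)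
    (P.toBlocks₁₁ * B₂ * K.toBlocks₁₁ + P.toBlocks₁₂ * K.toBlocks₂₁)
    (PhiM A B₂ C₂ K P)

/-- The mapping `Ψ_K(Λ,X,Y,Ξ)` arising in output feedback ECL constructions. -/
def PsiK {n m p : ℕ} (A : Matrix (Fin n) (Fin n) ℝ) (B₂ : Matrix (Fin n) (Fin m) ℝ)
    (C₂ : Matrix (Fin p) (Fin n) ℝ)
    (Λ : Matrix (Fin m ⊕ Fin n) (Fin p ⊕ Fin n) ℝ)
    (X Y Ξ : Matrix (Fin n) (Fin n) ℝ) :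
    Matrix (Fin m ⊕ Fin n) (Fin p ⊕ Fin n) ℝ :=
  (Matrix.fromBlocks (1 : Matrix (Fin m) (Fin m) ℝ) 0 (Y * B₂) Ξ)⁻¹
    * (Λ - Matrix.fromBlocks 0 0 0 (Y * A * X))
    * (Matrix.fromBlocks (1 : Matrix (Fin p) (Fin p) ℝ) (C₂ * X) 0
        (-(Ξ⁻¹ * (Y - X⁻¹) * X)))⁻¹

/-- The mapping `Ψ_P(X,Y,Ξ)` arising in output feedback ECL constructions. -/
def PsiP {n : ℕ} (X Y Ξ : Matrix (Fin n) (Fin n) ℝ) :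
    Matrix (Fin n ⊕ Fin n) (Fin n ⊕ Fin n) ℝ :=
  Matrix.fromBlocks Y Ξ Ξᵀ (Ξᵀ * (Y - X⁻¹)⁻¹ * Ξ)

/-- **Lemma D.3**: for any `K` and symmetric positive definite `P` with `P₁₂`
invertible, `Ψ_P((P⁻¹)₁₁, P₁₁, P₁₂) = P` and
`Ψ_K(Φ_Λ(K,P), (P⁻¹)₁₁, P₁₁, P₁₂) = K`. -/
theorem psiP_psiK_of_phiLam {n m p : ℕ}
    (A : Matrix (Fin n) (Fin n) ℝ) (B₂ : Matrix (Fin n) (Fin m) ℝ)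
    (C₂ : Matrix (Fin p) (Fin n) ℝ)
    (K : Matrix (Fin m ⊕ Fin n) (Fin p ⊕ Fin n) ℝ)
    {P : Matrix (Fin n ⊕ Fin n) (Fin n ⊕ Fin n) ℝ}
    (hP : P.PosDef) (hP12 : IsUnit P.toBlocks₁₂) :
    PsiP (P⁻¹).toBlocks₁₁ P.toBlocks₁₁ P.toBlocks₁₂ = P ∧
    PsiK A B₂ C₂ (PhiLam A B₂ C₂ K P) (P⁻¹).toBlocks₁₁ P.toBlocks₁₁ P.toBlocks₁₂ = K := by
  classical
  set p11 := P.toBlocks₁₁ with hp11def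
  set p12 := P.toBlocks₁₂ with hp12def
  set p21 := P.toBlocks₂₁ with hp21def
  set p22 := P.toBlocks₂₂ with hp22def
  set q11 := (P⁻¹).toBlocks₁₁ with hq11def
  set q12 := (P⁻¹).toBlocks₁₂ with hq12def
  set q21 := (P⁻¹).toBlocks₂₁ with hq21def
  set q22 := (P⁻¹).toBlocks₂₂ with hq22def
  set k11 := K.toBlocks₁₁ with hk11def
  set k12 := K.toBlocks₁₂ with hk12def
  set k21 := K.toBlocks₂₁ with hk21def
  set k22 := K.toBlocks₂₂ with hk22def
  have hPd : IsUnit P.det := (Matrix.isUnit_iff_isUnit_det P).1 hP.isUnit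
  have hPQ : P * P⁻¹ = 1 := Matrix.mul_nonsing_inv P hPd
  -- block equations of P * P⁻¹ = 1
  have hb : Matrix.fromBlocks (p11 * q11 + p12 * q21) (p11 * q12 + p12 * q22)
      (p21 * q11 + p22 * q21) (p21 * q12 + p22 * q22)
      = Matrix.fromBlocks 1 0 0 1 := by
    rw [← fromBlocks_multiply, hp11def, hp12def, hp21def, hp22def,
      hq11def, hq12def, hq21def, hq22def, fromBlocks_toBlocks, fromBlocks_toBlocks,
      fromBlocks_one]
    exact hPQ
  obtain ⟨e11, -, e21, -⟩ := Matrix.fromBlocks_inj.mp hb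
  -- symmetry
  have hsym : Pᵀ = P := hP.1
  have hp21 : p21 = p12ᵀ := by
    ext i j
    exact (congrFun (congrFun hsym (Sum.inr i)) (Sum.inl j)).symm
  -- invertibility of the blocks we need
  have hq11u : IsUnit q11 := (posDef_blk₁₁ hP.inv).isUnit
  have hp22u : IsUnit p22 := (posDef_blk₂₂ hP).isUnit
  have hp21u : IsUnit p21 := by
    rw [hp21, Matrix.isUnit_iff_isUnit_det, Matrix.det_transpose,
      ← Matrix.isUnit_iff_isUnit_det]
    exact hP12
  have hq11d : IsUnit q11.det := (Matrix.isUnit_iff_isUnit_det q11).1 hq11u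
  have hp22d : IsUnit p22.det := (Matrix.isUnit_iff_isUnit_det p22).1 hp22u
  have hp21d : IsUnit p21.det := (Matrix.isUnit_iff_isUnit_det p21).1 hp21u
  have hp12d : IsUnit p12.det := (Matrix.isUnit_iff_isUnit_det p12).1 hP12
  -- q21 in terms of the blocks of P
  have hq21 : q21 = -(p22⁻¹ * (p21 * q11)) := by
    have h1 : p22 * q21 = -(p21 * q11) := by
      rw [eq_neg_iff_add_eq_zero, add_comm]; exact e21
    rw [← Matrix.nonsing_inv_mul_cancel_left p22 q21 hp22d, h1, mul_neg]
  -- the Schur-type identity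
  have h2 : (p11 - p12 * p22⁻¹ * p21) * q11 = 1 := by
    have hpq : p12 * q21 = -(p12 * (p22⁻¹ * (p21 * q11))) := by rw [hq21, mul_neg]
    calc (p11 - p12 * p22⁻¹ * p21) * q11
        = p11 * q11 + p12 * q21 := by
          rw [hpq, sub_mul, sub_eq_add_neg, Matrix.mul_assoc, Matrix.mul_assoc]
      _ = 1 := e11
  have hq11inv : q11⁻¹ = p11 - p12 * p22⁻¹ * p21 := Matrix.inv_eq_left_inv h2
  have hS : p11 - q11⁻¹ = p12 * p22⁻¹ * p21 := by
    rw [hq11inv, sub_sub_cancel]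
  have hSinv : (p11 - q11⁻¹)⁻¹ = p21⁻¹ * (p22 * p12⁻¹) := by
    rw [hS, Matrix.mul_inv_rev, Matrix.mul_inv_rev,
      Matrix.nonsing_inv_nonsing_inv p22 hp22d]
  -- first claim
  have claim1 : PsiP q11 p11 p12 = P := by
    rw [PsiP]
    have h22 : p12ᵀ * (p11 - q11⁻¹)⁻¹ * p12 = p22 := by
      rw [← hp21, hSinv, ← mul_assoc, Matrix.mul_nonsing_inv p21 hp21d, one_mul,
        mul_assoc, Matrix.nonsing_inv_mul p12 hp12d, mul_one]
    rw [h22, ← hp21]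
    conv_rhs => rw [← fromBlocks_toBlocks P, ← hp11def, ← hp12def, ← hp21def, ← hp22def]
  -- second claim
  have hRblk : -(p12⁻¹ * (p11 - q11⁻¹) * q11) = q21 := by
    rw [hS, hq21]
    rw [show p12⁻¹ * (p12 * p22⁻¹ * p21) = p22⁻¹ * p21 by
      rw [mul_assoc p12, Matrix.nonsing_inv_mul_cancel_left p12 _ hp12d], mul_assoc]
  have claim2 : PsiK A B₂ C₂ (PhiLam A B₂ C₂ K P) q11 p11 p12 = K := by
    rw [PsiK, PhiLam, PhiM, hRblk]
    rw [← hk11def, ← hk12def, ← hk21def, ← hk22def, ← hp11def, ← hp12def,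
      ← hq11def, ← hq21def]
    set L : Matrix (Fin m ⊕ Fin n) (Fin m ⊕ Fin n) ℝ :=
      Matrix.fromBlocks 1 0 (p11 * B₂) p12 with hLdef
    set R : Matrix (Fin p ⊕ Fin n) (Fin p ⊕ Fin n) ℝ :=
      Matrix.fromBlocks 1 (C₂ * q11) 0 q21 with hRdef
    have hq21u : IsUnit q21 := by
      rw [hq21]
      exact ((Matrix.isUnit_nonsing_inv_iff.2 hp22u).mul (hp21u.mul hq11u)).neg
    have hLd : IsUnit L.det := by
      rw [hLdef, Matrix.det_fromBlocks_zero₁₂, Matrix.det_one, one_mul]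
      exact hp12d
    have hRd : IsUnit R.det := by
      rw [hRdef, Matrix.det_fromBlocks_zero₂₁, Matrix.det_one, one_mul]
      exact (Matrix.isUnit_iff_isUnit_det q21).1 hq21u
    have key : Matrix.fromBlocks k11 (k11 * C₂ * q11 + k12 * q21)
        (p11 * B₂ * k11 + p12 * k21)
        (p12 * k21 * C₂ * q11 + p11 * B₂ * k12 * q21 + p12 * k22 * q21
          + p11 * (A + B₂ * k11 * C₂) * q11)
        - Matrix.fromBlocks 0 0 0 (p11 * A * q11)
        = L * (K * R) := by
      rw [hLdef, hRdef, ← fromBlocks_toBlocks K, ← hk11def, ← hk12def, ← hk21def,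
        ← hk22def, fromBlocks_multiply, fromBlocks_multiply, sub_eq_add_neg,
        fromBlocks_neg, fromBlocks_add, Matrix.fromBlocks_inj]
      refine ⟨?_, ?_, ?_, ?_⟩ <;>
        simp only [Matrix.mul_add, Matrix.add_mul, Matrix.mul_assoc, Matrix.mul_one,
          Matrix.one_mul, Matrix.mul_zero, Matrix.zero_mul, add_zero, zero_add,
          neg_zero, sub_zero] <;>
        abel
    rw [key, ← Matrix.mul_assoc _ L _, Matrix.nonsing_inv_mul L hLd, Matrix.one_mul,
      Matrix.mul_nonsing_inv_cancel_right R K hRd]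
  exact ⟨claim1, claim2⟩
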